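/- Let G be a Lie group whose Lie algebra 𝔤 carries an invariant metric B, with Cartan 3-form η = (1/12) B(θ^L, [θ^L, θ^L]) ∈ Ω³(G). Then the map κ : G × (𝔤̄ ⊕ 𝔤) → TG ⊕ T*G given by κ(ζ₁, ζ₂) = (ζ₂^L − ζ₁^R, ½B(θ^L, ζ₂) + ½B(θ^R, ζ₁)) is an isomorphism of vector bundles which is isometric: for the split-signature metric ⟨v + α, v' + α'⟩ = α(v') + α'(v) on TG ⊕ T*G and the metric (−B) ⊕ B on 𝔤̄ ⊕ 𝔤, one has ⟨κ(ζ₁,ζ₂), κ(ζ₁',ζ₂')⟩ = −B(ζ₁,ζ₁') + B(ζ₂,ζ₂') at every point of G. -/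
import Mathlib


open Module

/-- Fiberwise version (in the right trivializations `T_gG ≅ 𝔤`, `T*_gG ≅ 𝔤*`) of
the isomorphism `κ : G × (𝔤̄ ⊕ 𝔤) → TG ⊕ T*G`,
`κ(ζ₁, ζ₂) = (ζ₂^L − ζ₁^R, ½B(θ^L, ζ₂) + ½B(θ^R, ζ₁))`, for a Lie group `G` whose
Lie algebra `𝔤` carries an `Ad`-invariant metric `B`.  At a point `g`, the vector
part is `Ad_g ζ₂ − ζ₁` and the covector part sends `w ∈ 𝔤 ≅ T_gG` to
`½B(Ad_{g⁻¹}w, ζ₂) + ½B(w, ζ₁)`.  The claim: `κ` is a fiberwise linear bijection,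
and an isometry from the metric `(−B) ⊕ B` on `𝔤̄ ⊕ 𝔤` to the split-signature
metric `⟨v + α, v' + α'⟩ = α(v') + α'(v)` on `TG ⊕ T*G`. -/
theorem cartan_courant_trivialization {V : Type*} [AddCommGroup V] [Module ℝ V]
    [FiniteDimensional ℝ V]
    (B : V →ₗ[ℝ] V →ₗ[ℝ] ℝ)
    (hBsym : ∀ x y, B x y = B y x)
    (hBnd : ∀ x, (∀ y, B x y = 0) → x = 0)
    {G : Type*} [Group G]
    (Ad : G →* (V ≃ₗ[ℝ] V))
    (hAd : ∀ (g : G) (x y : V), B (Ad g x) (Ad g y) = B x y)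
    (kap : G → (V × V) →ₗ[ℝ] (V × Module.Dual ℝ V))
    (hkap₁ : ∀ (g : G) (ζ : V × V), (kap g ζ).1 = Ad g ζ.2 - ζ.1)
    (hkap₂ : ∀ (g : G) (ζ : V × V) (w : V),
      (kap g ζ).2 w = (2⁻¹ : ℝ) * B (Ad g⁻¹ w) ζ.2 + (2⁻¹ : ℝ) * B w ζ.1) :
    ∀ g : G,
      Function.Bijective (kap g) ∧
      ∀ ζ ζ' : V × V,
        (kap g ζ).2 ((kap g ζ').1) + (kap g ζ').2 ((kap g ζ).1) =
          -(B ζ.1 ζ'.1) + B ζ.2 ζ'.2 := by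
  -- `Ad g⁻¹` is the inverse of `Ad g`
  have hinv : ∀ (g : G) (x : V), Ad g⁻¹ (Ad g x) = x := by
    intro g x
    have h : (Ad g⁻¹ * Ad g) x = (1 : V ≃ₗ[ℝ] V) x := by
      rw [← map_mul, inv_mul_cancel, map_one]
    exact h
  have hinv' : ∀ (g : G) (x : V), Ad g (Ad g⁻¹ x) = x := by
    intro g x
    have := hinv g⁻¹ x
    simpa using this
  have hAd' : ∀ (g : G) (x y : V), B (Ad g⁻¹ x) y = B x (Ad g y) := by
    intro g x y
    calc B (Ad g⁻¹ x) y = B (Ad g (Ad g⁻¹ x)) (Ad g y) := (hAd g _ _).symm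
      _ = B x (Ad g y) := by rw [hinv']
  intro g
  constructor
  · -- bijectivity: injectivity plus dimension count
    have hdim : finrank ℝ (V × V) = finrank ℝ (V × Module.Dual ℝ V) := by
      simp [Module.finrank_prod, Subspace.dual_finrank_eq]
    have hinj : Function.Injective (kap g) := by
      rw [injective_iff_map_eq_zero]
      intro ζ hζ
      have h1 : Ad g ζ.2 - ζ.1 = 0 := by rw [← hkap₁ g ζ, hζ]; rfl
      have h1' : ζ.1 = Ad g ζ.2 := (sub_eq_zero.mp h1).symm
      have h2 : ζ.1 = 0 := by
        apply hBnd
        intro y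
        have h3 : (kap g ζ).2 y = 0 := by rw [hζ]; rfl
        rw [hkap₂ g ζ y] at h3
        have h4 : B (Ad g⁻¹ y) ζ.2 = B y ζ.1 := by
          rw [hAd' g y ζ.2, ← h1']
        rw [h4] at h3
        have : B y ζ.1 = 0 := by linarith
        rw [hBsym]; exact this
      have h5 : ζ.2 = 0 := by
        have : Ad g ζ.2 = 0 := by rw [← h1', h2]
        have := congrArg (Ad g⁻¹) this
        rw [hinv, map_zero] at this
        exact this
      exact Prod.ext h2 h5
    exact ⟨hinj, (LinearMap.injective_iff_surjective_of_finrank_eq_finrank hdim).mp hinj⟩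
  · intro ζ ζ'
    rw [hkap₁ g ζ, hkap₁ g ζ', hkap₂ g ζ _, hkap₂ g ζ' _]
    simp only [map_sub, LinearMap.sub_apply, hinv]
    have e1 : B (Ad g⁻¹ ζ'.1) ζ.2 = B (Ad g ζ.2) ζ'.1 := by
      rw [hAd' g ζ'.1 ζ.2, hBsym]
    have e2 : B (Ad g⁻¹ ζ.1) ζ'.2 = B (Ad g ζ'.2) ζ.1 := by
      rw [hAd' g ζ.1 ζ'.2, hBsym]
    have e3 : B ζ.2 ζ'.2 = B ζ'.2 ζ.2 := hBsym _ _
    have e4 : B ζ.1 ζ'.1 = B ζ'.1 ζ.1 := hBsym _ _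
    ring_nf
    linarith
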